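/- Let (M, b) be a lattice and x ∈ M \ ker(b); let s = s_b(x) and write b(x, x) = s·c0. If s + c0 ≠ 0, then the (−)-modification by x of (M, m^+_x(b)) equals (M, b), i.e. m^−_x(m^+_x(b)) = b. If s − c0 ≠ 0, then the (+)-modification by x of (M, m^−_x(b)) equals (M, b), i.e. m^+_x(m^−_x(b)) = b. -/
import Mathlib


/-- `s` is the scale of `x` with respect to the bilinear form `b`: if `x` lies in the
kernel of `b` then `s = 0`; otherwise `s` is the largest positive integer dividing
`b(x, m)` for all `m`. -/
def IsScale {M : Type*} (b : M → M → ℤ) (x : M) (s : ℤ) : Prop :=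
  (s = 0 ∧ ∀ m, b x m = 0) ∨
  (0 < s ∧ (∀ m, s ∣ b x m) ∧ ∀ t : ℤ, 0 < t → (∀ m, t ∣ b x m) → t ≤ s)

private lemma key_div {M : Type*} [AddCommGroup M] (b : M →+ M →+ ℤ) (x : M) (s : ℤ)
    (m0 : M) (hm0 : b x m0 / s = 1 ∨ b x m0 / s = -1)
    (d : ℤ) (hd : d ≠ 0) (s2 : ℤ)
    (h2 : (s2 = 0 ∧ ∀ m, d * (b x m / s) = 0) ∨
        (0 < s2 ∧ (∀ m, s2 ∣ d * (b x m / s)) ∧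
          ∀ t : ℤ, 0 < t → (∀ m, t ∣ d * (b x m / s)) → t ≤ s2)) :
    ∀ α β : M, (d * (b x α / s)) / s2 * ((d * (b x β / s)) / s2) =
      (b x α / s) * (b x β / s) := by
  rcases h2 with ⟨_, h0⟩ | ⟨hs2pos, hdvd2, hmax2⟩
  · exfalso
    have := h0 m0
    rcases hm0 with h | h <;> rw [h] at this <;> omega
  have hs2d : s2 ∣ d := by
    have := hdvd2 m0
    rcases hm0 with h | h <;> rw [h] at this
    · simpa using this
    · simpa using (dvd_neg.mp (by simpa using this))
  have habsle : |d| ≤ s2 :=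
    hmax2 |d| (abs_pos.mpr hd) fun m => Dvd.dvd.mul_right ((abs_dvd _ _).mpr dvd_rfl) _
  have hle : s2 ≤ |d| := Int.le_of_dvd (abs_pos.mpr hd) ((dvd_abs ..).mpr hs2d)
  have hs2 : s2 = |d| := le_antisymm hle habsle
  intro α β
  rcases lt_or_gt_of_ne hd with hneg | hpos
  · have : s2 = -d := by rw [hs2, abs_of_neg hneg]
    subst this
    have h1 : d * (b x α / s) = (-d) * (-(b x α / s)) := by ring
    have h2' : d * (b x β / s) = (-d) * (-(b x β / s)) := by ring
    rw [h1, h2', Int.mul_ediv_cancel_left _ (by omega), Int.mul_ediv_cancel_left _ (by omega)]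
    ring
  · have : s2 = d := by rw [hs2, abs_of_pos hpos]
    subst this
    rw [Int.mul_ediv_cancel_left _ (by omega), Int.mul_ediv_cancel_left _ (by omega)]

/-- Let `(M, b)` be a lattice and `x ∈ M \ ker(b)`; let `s = s_b(x)` and
write `b(x, x) = s·c0`.  If `s + c0 ≠ 0`, then the (−)-modification by `x` of
`(M, m^+_x(b))` equals `(M, b)`, i.e. `m^−_x(m^+_x(b)) = b`; if `s − c0 ≠ 0`, then the
(+)-modification by `x` of `(M, m^−_x(b))` equals `(M, b)`, i.e. `m^+_x(m^−_x(b)) = b`.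
(Here `s2` denotes the scale of `x` with respect to the modified form.) -/
theorem modification_inverse
    {M : Type*} [AddCommGroup M] [Module.Free ℤ M] [Module.Finite ℤ M]
    (b : M →+ M →+ ℤ) (hbsymm : ∀ x y, b x y = b y x)
    (x : M) (hx : ¬ ∀ m, b x m = 0)
    (s c0 : ℤ)
    (hs : IsScale (fun m n => b m n) x s)
    (hc0 : b x x = s * c0) :
    (∀ s2 : ℤ, s + c0 ≠ 0 →
      IsScale (fun α β => b α β + b x α / s * (b x β / s)) x s2 →
      ∀ α β : M,
        (b α β + b x α / s * (b x β / s)) -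
            ((b x α + b x x / s * (b x α / s)) / s2) *
              ((b x β + b x x / s * (b x β / s)) / s2) = b α β) ∧
    (∀ s2 : ℤ, s - c0 ≠ 0 →
      IsScale (fun α β => b α β - b x α / s * (b x β / s)) x s2 →
      ∀ α β : M,
        (b α β - b x α / s * (b x β / s)) +
            ((b x α - b x x / s * (b x α / s)) / s2) *
              ((b x β - b x x / s * (b x β / s)) / s2) = b α β) := by
  rcases hs with ⟨_, h0⟩ | ⟨hspos, hdvd, hmax⟩
  · exact absurd h0 hx
  have hsne : s ≠ 0 := ne_of_gt hspos
  -- there is `m0` with `b x m0 / s = ±1`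
  obtain ⟨m0, hm0⟩ : ∃ m0 : M, b x m0 / s = 1 ∨ b x m0 / s = -1 := by
    obtain ⟨g, hg⟩ := Int.subgroup_cyclic (b x).range
    have hgmem : g ∈ (b x).range := by
      rw [hg]; exact AddSubgroup.subset_closure rfl
    obtain ⟨n0, hn0⟩ := hgmem
    have hgdvd : ∀ m : M, g ∣ b x m := by
      intro m
      have : b x m ∈ (b x).range := ⟨m, rfl⟩
      rw [hg, AddSubgroup.mem_closure_singleton] at this
      obtain ⟨n, hn⟩ := this
      exact ⟨n, by rw [← hn, smul_eq_mul, mul_comm]⟩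
    have hgne : g ≠ 0 := by
      intro h
      apply hx
      intro m
      have := hgdvd m
      rw [h] at this
      exact (zero_dvd_iff).mp this
    have h1 : |g| ≤ s := hmax |g| (abs_pos.mpr hgne) fun m => (abs_dvd ..).mpr (hgdvd m)
    have h2 : s ∣ g := hn0 ▸ hdvd n0
    have h3 : s ≤ |g| := Int.le_of_dvd (abs_pos.mpr hgne) ((dvd_abs ..).mpr h2)
    have habs : |g| = s := le_antisymm h1 h3
    refine ⟨n0, ?_⟩
    rcases abs_cases g with ⟨h, _⟩ | ⟨h, _⟩
    · left; rw [hn0, ← h, habs, Int.ediv_self hsne]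
    · right
      have : g = -s := by omega
      rw [hn0, this]
      rw [show -s = s * (-1) by ring, Int.mul_ediv_cancel_left _ hsne]
  have hcc : b x x / s = c0 := by rw [hc0, Int.mul_ediv_cancel_left _ hsne]
  have hbm : ∀ m : M, b x m = s * (b x m / s) := fun m => by
    rw [mul_comm]; exact (Int.ediv_mul_cancel (hdvd m)).symm
  constructor
  · intro s2 hne hs2
    have hform : ∀ m : M, b x m + b x x / s * (b x m / s) = (s + c0) * (b x m / s) := by
      intro m
      rw [hcc]
      nth_rewrite 1 [hbm m]
      ring
    have h2 : (s2 = 0 ∧ ∀ m, (s + c0) * (b x m / s) = 0) ∨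
        (0 < s2 ∧ (∀ m, s2 ∣ (s + c0) * (b x m / s)) ∧
          ∀ t : ℤ, 0 < t → (∀ m, t ∣ (s + c0) * (b x m / s)) → t ≤ s2) := by
      rcases hs2 with ⟨h, h'⟩ | ⟨h, h', h''⟩
      · exact Or.inl ⟨h, fun m => by rw [← hform m]; exact h' m⟩
      · exact Or.inr ⟨h, fun m => by rw [← hform m]; exact h' m,
          fun t ht htd => h'' t ht fun m => by
            have := htd m; rw [← hform m] at this; exact this⟩
    have := key_div b x s m0 hm0 (s + c0) hne s2 h2 
    intro α β
    rw [hform α, hform β, this α β]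
    ring
  · intro s2 hne hs2
    have hform : ∀ m : M, b x m - b x x / s * (b x m / s) = (s - c0) * (b x m / s) := by
      intro m
      rw [hcc]
      nth_rewrite 1 [hbm m]
      ring
    have h2 : (s2 = 0 ∧ ∀ m, (s - c0) * (b x m / s) = 0) ∨
        (0 < s2 ∧ (∀ m, s2 ∣ (s - c0) * (b x m / s)) ∧
          ∀ t : ℤ, 0 < t → (∀ m, t ∣ (s - c0) * (b x m / s)) → t ≤ s2) := by
      rcases hs2 with ⟨h, h'⟩ | ⟨h, h', h''⟩
      · exact Or.inl ⟨h, fun m => by rw [← hform m]; exact h' m⟩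
      · exact Or.inr ⟨h, fun m => by rw [← hform m]; exact h' m,
          fun t ht htd => h'' t ht fun m => by
            have := htd m; rw [← hform m] at this; exact this⟩
    have := key_div b x s m0 hm0 (s - c0) hne s2 h2
    intro α β
    rw [hform α, hform β, this α β]
    ring
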